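/- For m = 1, 2, 3 let β_m, θ_m ∈ ℝᵖ and W_m be deterministic real n×p matrices; let (ε₁, ε₂, ε₃) and (η₁, η₂, η₃) be independent triples of square-integrable random vectors Ω → ℝⁿ, all with mean zero, and with E[ε_m ε_{m'}ᵀ] = Σ_{mm'}. Define training responses y_m = X_m β_m + W_m θ_m + ε_m, test responses z_m = X_m β_m + W_m θ_m + η_m, z = z₁ + z₂, and fitted values ŷ = H(y₁ + y₂), ŷ* = H₁ y₁ + H₂ y₂, ŷ₃ = H₃ y₃. Then E[‖(z + z₃) − (ŷ + ŷ₃)‖²] − E[‖(z + z₃) − (ŷ* + ŷ₃)‖²] = Tr{(H − H₁)Σ₁₁} + Tr{(H − H₂)Σ₂₂} + 2Tr{(H − H₂H₁)Σ₁₂} + 2Tr{H₃(H − H₁)Σ₁₃} + 2Tr{H₃(H − H₂)Σ₂₃} + ‖(I − H)W₁θ₁‖² − ‖(I − H₁)W₁θ₁‖² + ‖(I − H)W₂θ₂‖² − ‖(I − H₂)W₂θ₂‖² + 2(W₁θ₁)ᵀ(I − H)(W₂θ₂) − 2(W₁θ₁)ᵀ(I − H₁)(I − H₂)(W₂θ₂)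 + 2(W₃θ₃)ᵀ(I − H₃)(H₁ − H)(W₁θ₁) + 2(W₃θ₃)ᵀ(I − H₃)(H₂ − H)(W₂θ₂). -/

import Mathlib

open Matrix MeasureTheory ProbabilityTheory
open scoped BigOperators

/-- The hat matrix `H_A = A (AᵀA)⁻¹ Aᵀ` of a design matrix `A`. -/
noncomputable def hatMat {n : ℕ} {q : Type*} [Fintype q] [DecidableEq q]
    (A : Matrix (Fin n) q ℝ) : Matrix (Fin n) (Fin n) ℝ :=
  A * (Aᵀ * A)⁻¹ * Aᵀ

lemma l2_mul_int {Ω : Type*} [MeasurableSpace Ω] {P : Measure Ω} {f g : Ω → ℝ}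
    (hf : MemLp f 2 P) (hg : MemLp g 2 P) :
    Integrable (fun ω => f ω * g ω) P := by
  have h1 : Integrable (fun ω => (f ω + g ω) ^ 2) P := by
    simpa using (hf.add hg).integrable_sq
  have h2 := hf.integrable_sq
  have h3 := hg.integrable_sq
  have heq : (fun ω => f ω * g ω)
      = fun ω => ((f ω + g ω) ^ 2 - f ω ^ 2 - g ω ^ 2) / 2 := by
    funext ω; ring
  rw [heq]
  exact ((h1.sub h2).sub h3).div_const 2

lemma hatMat_mul_self {n : ℕ} {q : Type*} [Fintype q] [DecidableEq q]
    (A : Matrix (Fin n) q ℝ) (h : IsUnit (Aᵀ * A)) :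
    hatMat A * A = A := by
  have hd : IsUnit (Aᵀ * A).det := (Matrix.isUnit_iff_isUnit_det _).mp h
  unfold hatMat
  rw [Matrix.mul_assoc, Matrix.mul_assoc, Matrix.nonsing_inv_mul _ hd, Matrix.mul_one]

lemma hatMat_transpose {n : ℕ} {q : Type*} [Fintype q] [DecidableEq q]
    (A : Matrix (Fin n) q ℝ) : (hatMat A)ᵀ = hatMat A := by
  simp [hatMat, Matrix.transpose_mul, Matrix.transpose_nonsing_inv, Matrix.mul_assoc]

lemma hatMat_idem {n : ℕ} {q : Type*} [Fintype q] [DecidableEq q]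
    (A : Matrix (Fin n) q ℝ) (h : IsUnit (Aᵀ * A)) :
    hatMat A * hatMat A = hatMat A := by
  have h1 := hatMat_mul_self A h
  nth_rewrite 2 [show hatMat A = A * (Aᵀ * A)⁻¹ * Aᵀ from rfl]
  rw [← Matrix.mul_assoc, ← Matrix.mul_assoc, h1]
  rfl

lemma flip_dot {n : ℕ} (K : Matrix (Fin n) (Fin n) ℝ) (u v : Fin n → ℝ) :
    (K *ᵥ u) ⬝ᵥ v = u ⬝ᵥ (Kᵀ *ᵥ v) := by
  rw [Matrix.dotProduct_mulVec, Matrix.vecMul_transpose]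

/-- **Theorem 2, Eq. (testerror_noex)** (conditional-on-`W` identity): the difference of
expected test errors between AVR and IR, with deterministic `W_m`. -/
theorem test_error_difference_deterministic_W {n p : ℕ}
    {Ω : Type*} [MeasurableSpace Ω] (P : Measure Ω) [IsProbabilityMeasure P]
    (X : Fin 3 → Matrix (Fin n) (Fin p) ℝ)
    (hXm : ∀ m, IsUnit ((X m)ᵀ * X m))
    (hX : IsUnit ((fromCols (X 0) (X 1))ᵀ * fromCols (X 0) (X 1)))
    (β θ : Fin 3 → Fin p → ℝ)
    (W : Fin 3 → Matrix (Fin n) (Fin p) ℝ)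
    (ε η : Fin 3 → Ω → Fin n → ℝ)
    (Sig : Fin 3 → Fin 3 → Matrix (Fin n) (Fin n) ℝ)
    (hεL2 : ∀ m i, MemLp (fun ω => ε m ω i) 2 P)
    (hηL2 : ∀ m i, MemLp (fun ω => η m ω i) 2 P)
    (hεmean : ∀ m i, ∫ ω, ε m ω i ∂P = 0)
    (hηmean : ∀ m i, ∫ ω, η m ω i ∂P = 0)
    (hεη : IndepFun (fun ω => fun m => ε m ω) (fun ω => fun m => η m ω) P)
    (hcov : ∀ m m' i j, ∫ ω, ε m ω i * ε m' ω j ∂P = Sig m m' i j) :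
    let y : Fin 3 → Ω → Fin n → ℝ :=
      fun m ω => (X m).mulVec (β m) + (W m).mulVec (θ m) + ε m ω
    let z : Fin 3 → Ω → Fin n → ℝ :=
      fun m ω => (X m).mulVec (β m) + (W m).mulVec (θ m) + η m ω
    let H := hatMat (fromCols (X 0) (X 1))
    let H₁ := hatMat (X 0)
    let H₂ := hatMat (X 1)
    let H₃ := hatMat (X 2)
    let yhat : Ω → Fin n → ℝ := fun ω => H.mulVec (y 0 ω + y 1 ω)
    let yhatStar : Ω → Fin n → ℝ := fun ω => H₁.mulVec (y 0 ω) + H₂.mulVec (y 1 ω)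
    let yhat₃ : Ω → Fin n → ℝ := fun ω => H₃.mulVec (y 2 ω)
    let Wθ : Fin 3 → Fin n → ℝ := fun m => (W m).mulVec (θ m)
    (∫ ω, ((z 0 ω + z 1 ω + z 2 ω) - (yhat ω + yhat₃ ω)) ⬝ᵥ
          ((z 0 ω + z 1 ω + z 2 ω) - (yhat ω + yhat₃ ω)) ∂P)
      - (∫ ω, ((z 0 ω + z 1 ω + z 2 ω) - (yhatStar ω + yhat₃ ω)) ⬝ᵥ
          ((z 0 ω + z 1 ω + z 2 ω) - (yhatStar ω + yhat₃ ω)) ∂P)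
      = Matrix.trace ((H - H₁) * Sig 0 0) + Matrix.trace ((H - H₂) * Sig 1 1)
        + 2 * Matrix.trace ((H - H₂ * H₁) * Sig 0 1)
        + 2 * Matrix.trace (H₃ * (H - H₁) * Sig 0 2)
        + 2 * Matrix.trace (H₃ * (H - H₂) * Sig 1 2)
        + ((1 - H).mulVec (Wθ 0)) ⬝ᵥ ((1 - H).mulVec (Wθ 0))
        - ((1 - H₁).mulVec (Wθ 0)) ⬝ᵥ ((1 - H₁).mulVec (Wθ 0))
        + ((1 - H).mulVec (Wθ 1)) ⬝ᵥ ((1 - H).mulVec (Wθ 1))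
        - ((1 - H₂).mulVec (Wθ 1)) ⬝ᵥ ((1 - H₂).mulVec (Wθ 1))
        + 2 * ((Wθ 0) ⬝ᵥ ((1 - H).mulVec (Wθ 1)))
        - 2 * ((Wθ 0) ⬝ᵥ (((1 - H₁) * (1 - H₂)).mulVec (Wθ 1)))
        + 2 * ((Wθ 2) ⬝ᵥ (((1 - H₃) * (H₁ - H)).mulVec (Wθ 0)))
        + 2 * ((Wθ 2) ⬝ᵥ (((1 - H₃) * (H₂ - H)).mulVec (Wθ 1))) := by
  intro y z H H₁ H₂ H₃ yhat yhatStar yhat₃ Wθ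
  -- ### matrix facts
  have hsH : Hᵀ = H := hatMat_transpose _
  have hsH1 : H₁ᵀ = H₁ := hatMat_transpose _
  have hsH2 : H₂ᵀ = H₂ := hatMat_transpose _
  have hsH3 : H₃ᵀ = H₃ := hatMat_transpose _
  have hHH : H * H = H := hatMat_idem _ hX
  have hH1H1 : H₁ * H₁ = H₁ := hatMat_idem _ (hXm 0)
  have hH2H2 : H₂ * H₂ = H₂ := hatMat_idem _ (hXm 1)
  have hH3H3 : H₃ * H₃ = H₃ := hatMat_idem _ (hXm 2)
  have hHfc : H * fromCols (X 0) (X 1) = fromCols (X 0) (X 1) := hatMat_mul_self _ hX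
  have h2 : fromCols (H * X 0) (H * X 1) = fromCols (X 0) (X 1) := by
    rw [← Matrix.mul_fromCols]; exact hHfc
  obtain ⟨hHX0, hHX1⟩ := (Matrix.fromCols_ext_iff _ _ _ _).mp h2
  have hH1X : H₁ * X 0 = X 0 := hatMat_mul_self _ (hXm 0)
  have hH2X : H₂ * X 1 = X 1 := hatMat_mul_self _ (hXm 1)
  have hH3X : H₃ * X 2 = X 2 := hatMat_mul_self _ (hXm 2)
  have hv0 : H *ᵥ (X 0 *ᵥ β 0) = X 0 *ᵥ β 0 := by rw [Matrix.mulVec_mulVec, hHX0]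
  have hv1 : H *ᵥ (X 1 *ᵥ β 1) = X 1 *ᵥ β 1 := by rw [Matrix.mulVec_mulVec, hHX1]
  have hv10 : H₁ *ᵥ (X 0 *ᵥ β 0) = X 0 *ᵥ β 0 := by rw [Matrix.mulVec_mulVec, hH1X]
  have hv21 : H₂ *ᵥ (X 1 *ᵥ β 1) = X 1 *ᵥ β 1 := by rw [Matrix.mulVec_mulVec, hH2X]
  have hv32 : H₃ *ᵥ (X 2 *ᵥ β 2) = X 2 *ᵥ β 2 := by rw [Matrix.mulVec_mulVec, hH3X]
  -- ### basic integrability facts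
  have hεint : ∀ m i, Integrable (fun ω => ε m ω i) P := fun m i => (hεL2 m i).integrable one_le_two
  have hηint : ∀ m i, Integrable (fun ω => η m ω i) P := fun m i => (hηL2 m i).integrable one_le_two
  have hεε_int : ∀ m m' i j, Integrable (fun ω => ε m ω i * ε m' ω j) P :=
    fun m m' i j => l2_mul_int (hεL2 m i) (hεL2 m' j)
  have hind : ∀ (m m' : Fin 3) (i j : Fin n),
      IndepFun (fun ω => η m ω i) (fun ω => ε m' ω j) P := by
    intro m m' i j
    exact hεη.symm.comp ((measurable_pi_apply i).comp (measurable_pi_apply m))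
      ((measurable_pi_apply j).comp (measurable_pi_apply m'))
  have hηε0 : ∀ (m m' : Fin 3) (i j : Fin n), ∫ ω, η m ω i * ε m' ω j ∂P = 0 := by
    intro m m' i j
    have h : ∫ ω, η m ω i * ε m' ω j ∂P = (∫ ω, η m ω i ∂P) * ∫ ω, ε m' ω j ∂P :=
      (hind m m' i j).integral_fun_mul_eq_mul_integral (hηint m i).1 (hεint m' j).1
    rw [h, hηmean m i, zero_mul]
  have hSigsymm : ∀ (m m' : Fin 3) (j k : Fin n), Sig m' m k j = Sig m m' j k := by
    intro m m' j k
    rw [← hcov m' m k j, ← hcov m m' j k]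
    congr 1; funext ω; ring
  have hML2 : ∀ (N : Matrix (Fin n) (Fin n) ℝ) (m : Fin 3) (i : Fin n),
      MemLp (fun ω => (N *ᵥ ε m ω) i) 2 P := by
    intro N m i
    have hmv : (fun ω => (N *ᵥ ε m ω) i) = (fun ω => ∑ j, N i j * ε m ω j) := rfl
    rw [hmv]
    exact memLp_finset_sum _ (fun j _ => (hεL2 m j).const_mul _)
  have hMint : ∀ (N : Matrix (Fin n) (Fin n) ℝ) m i, Integrable (fun ω => (N *ᵥ ε m ω) i) P :=
    fun N m i => (hML2 N m i).integrable one_le_two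
  have hMmean : ∀ (N : Matrix (Fin n) (Fin n) ℝ) m i, ∫ ω, (N *ᵥ ε m ω) i ∂P = 0 := by
    intro N m i
    have hmv : (fun ω => (N *ᵥ ε m ω) i) = (fun ω => ∑ j, N i j * ε m ω j) := rfl
    rw [hmv, integral_finset_sum _ (fun j _ => (hεint m j).const_mul _)]
    simp [integral_const_mul, hεmean]
  have hdot0 : ∀ (c : Fin n → ℝ) (g : Ω → Fin n → ℝ),
      (∀ i, Integrable (fun ω => g ω i) P) → (∀ i, ∫ ω, g ω i ∂P = 0) →
      ∫ ω, c ⬝ᵥ g ω ∂P = 0 := by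
    intro c g hgint hgmean
    have h : (fun ω => c ⬝ᵥ g ω) = fun ω => ∑ i, c i * g ω i := rfl
    rw [h, integral_finset_sum _ (fun i _ => (hgint i).const_mul _)]
    simp [integral_const_mul, hgmean]
  have dotInt : ∀ (u v : Ω → Fin n → ℝ),
      (∀ i, MemLp (fun ω => u ω i) 2 P) → (∀ i, MemLp (fun ω => v ω i) 2 P) →
      Integrable (fun ω => u ω ⬝ᵥ v ω) P := by
    intro u v hu hv
    have h : (fun ω => u ω ⬝ᵥ v ω) = fun ω => ∑ i, u ω i * v ω i := rfl
    rw [h]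
    exact integrable_finset_sum _ fun i _ => l2_mul_int (hu i) (hv i)
  -- quadratic expectation
  have hqd : ∀ (N N' : Matrix (Fin n) (Fin n) ℝ) (m m' : Fin 3),
      ∫ ω, (N *ᵥ ε m ω) ⬝ᵥ (N' *ᵥ ε m' ω) ∂P = Matrix.trace (Nᵀ * N' * Sig m' m) := by
    intro N N' m m'
    have hpt : (fun ω => (N *ᵥ ε m ω) ⬝ᵥ (N' *ᵥ ε m' ω))
        = fun ω => ∑ i, ∑ j, ∑ k, N i j * N' i k * (ε m ω j * ε m' ω k) := by
      funext ω
      simp only [dotProduct, Matrix.mulVec]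
      refine Finset.sum_congr rfl fun i _ => ?_
      rw [Finset.sum_mul_sum]
      exact Finset.sum_congr rfl fun j _ => Finset.sum_congr rfl fun k _ => by ring
    rw [hpt, integral_finset_sum _ fun i _ => integrable_finset_sum _ fun j _ =>
        integrable_finset_sum _ fun k _ => (hεε_int m m' j k).const_mul _]
    have hstep : ∀ i : Fin n, (∫ ω, ∑ j, ∑ k, N i j * N' i k * (ε m ω j * ε m' ω k) ∂P)
        = ∑ j, ∑ k, N i j * N' i k * Sig m m' j k := by
      intro i
      rw [integral_finset_sum _ fun j _ => integrable_finset_sum _ fun k _ =>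
          (hεε_int m m' j k).const_mul _]
      refine Finset.sum_congr rfl fun j _ => ?_
      rw [integral_finset_sum _ fun k _ => (hεε_int m m' j k).const_mul _]
      refine Finset.sum_congr rfl fun k _ => ?_
      rw [integral_const_mul, hcov]
    rw [Finset.sum_congr rfl fun i _ => hstep i]
    have htrace : Matrix.trace (Nᵀ * N' * Sig m' m)
        = ∑ j : Fin n, ∑ k : Fin n, ∑ i : Fin n, N i j * N' i k * Sig m m' j k := by
      simp only [Matrix.trace, Matrix.diag, Matrix.mul_apply, Matrix.transpose_apply,
        Finset.sum_mul]
      refine Finset.sum_congr rfl fun j _ => Finset.sum_congr rfl fun k _ =>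
        Finset.sum_congr rfl fun i _ => ?_
      rw [hSigsymm m m' j k]
    rw [htrace]
    rw [Finset.sum_comm]
    exact Finset.sum_congr rfl fun j _ => Finset.sum_comm
  -- zero cross term
  have hηεdot0 : ∀ (m : Fin 3) (N : Matrix (Fin n) (Fin n) ℝ) (m' : Fin 3),
      ∫ ω, (η m ω) ⬝ᵥ (N *ᵥ ε m' ω) ∂P = 0 := by
    intro m N m'
    have hpt : (fun ω => (η m ω) ⬝ᵥ (N *ᵥ ε m' ω))
        = fun ω => ∑ i, ∑ j, N i j * (η m ω i * ε m' ω j) := by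
      funext ω
      simp only [dotProduct, Matrix.mulVec, Finset.mul_sum]
      exact Finset.sum_congr rfl fun i _ => Finset.sum_congr rfl fun j _ => by ring
    rw [hpt, integral_finset_sum _ fun i _ => integrable_finset_sum _ fun j _ =>
        (l2_mul_int (hηL2 m i) (hεL2 m' j)).const_mul (N i j)]
    refine Finset.sum_eq_zero fun i _ => ?_
    rw [integral_finset_sum _ fun j _ => (l2_mul_int (hηL2 m i) (hεL2 m' j)).const_mul (N i j)]
    refine Finset.sum_eq_zero fun j _ => ?_
    rw [integral_const_mul, hηε0, mul_zero]
  -- ### the master expectation identity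
  have G : ∀ (a : Fin n → ℝ) (M₀ M₁ M₂ : Matrix (Fin n) (Fin n) ℝ),
      (∫ ω, ((a + (η 0 ω + η 1 ω + η 2 ω)) - (M₀ *ᵥ ε 0 ω + M₁ *ᵥ ε 1 ω + M₂ *ᵥ ε 2 ω)) ⬝ᵥ
            ((a + (η 0 ω + η 1 ω + η 2 ω)) - (M₀ *ᵥ ε 0 ω + M₁ *ᵥ ε 1 ω + M₂ *ᵥ ε 2 ω)) ∂P)
        = a ⬝ᵥ a
          + (∫ ω, (η 0 ω + η 1 ω + η 2 ω) ⬝ᵥ (η 0 ω + η 1 ω + η 2 ω) ∂P)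
          + (Matrix.trace (M₀ᵀ * M₀ * Sig 0 0) + Matrix.trace (M₀ᵀ * M₁ * Sig 1 0)
             + Matrix.trace (M₀ᵀ * M₂ * Sig 2 0) + Matrix.trace (M₁ᵀ * M₀ * Sig 0 1)
             + Matrix.trace (M₁ᵀ * M₁ * Sig 1 1) + Matrix.trace (M₁ᵀ * M₂ * Sig 2 1)
             + Matrix.trace (M₂ᵀ * M₀ * Sig 0 2) + Matrix.trace (M₂ᵀ * M₁ * Sig 1 2)
             + Matrix.trace (M₂ᵀ * M₂ * Sig 2 2)) := by
    intro a M₀ M₁ M₂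
    have hs2 : ∀ i, MemLp (fun ω => (η 0 ω + η 1 ω + η 2 ω) i) 2 P :=
      fun i => ((hηL2 0 i).add (hηL2 1 i)).add (hηL2 2 i)
    have ht2 : ∀ i, MemLp (fun ω => (M₀ *ᵥ ε 0 ω + M₁ *ᵥ ε 1 ω + M₂ *ᵥ ε 2 ω) i) 2 P :=
      fun i => ((hML2 M₀ 0 i).add (hML2 M₁ 1 i)).add (hML2 M₂ 2 i)
    have ha2 : ∀ i, MemLp (fun _ : Ω => a i) 2 P := fun i => memLp_const _
    have hsint : ∀ i, Integrable (fun ω => (η 0 ω + η 1 ω + η 2 ω) i) P :=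
      fun i => (hs2 i).integrable one_le_two
    have htint : ∀ i, Integrable (fun ω => (M₀ *ᵥ ε 0 ω + M₁ *ᵥ ε 1 ω + M₂ *ᵥ ε 2 ω) i) P :=
      fun i => (ht2 i).integrable one_le_two
    have hsmean : ∀ i, ∫ ω, (η 0 ω + η 1 ω + η 2 ω) i ∂P = 0 := by
      intro i
      have h : (fun ω => (η 0 ω + η 1 ω + η 2 ω) i)
          = fun ω => η 0 ω i + η 1 ω i + η 2 ω i := rfl
      have i01 : Integrable (fun ω => η 0 ω i + η 1 ω i) P := (hηint 0 i).add (hηint 1 i)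
      rw [h, integral_add i01 (hηint 2 i),
        integral_add (hηint 0 i) (hηint 1 i), hηmean, hηmean, hηmean]
      ring
    have htmean : ∀ i, ∫ ω, (M₀ *ᵥ ε 0 ω + M₁ *ᵥ ε 1 ω + M₂ *ᵥ ε 2 ω) i ∂P = 0 := by
      intro i
      have h : (fun ω => (M₀ *ᵥ ε 0 ω + M₁ *ᵥ ε 1 ω + M₂ *ᵥ ε 2 ω) i)
          = fun ω => (M₀ *ᵥ ε 0 ω) i + (M₁ *ᵥ ε 1 ω) i + (M₂ *ᵥ ε 2 ω) i := rfl
      have i01 : Integrable (fun ω => (M₀ *ᵥ ε 0 ω) i + (M₁ *ᵥ ε 1 ω) i) P :=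
        (hMint M₀ 0 i).add (hMint M₁ 1 i)
      rw [h, integral_add i01 (hMint M₂ 2 i),
        integral_add (hMint M₀ 0 i) (hMint M₁ 1 i), hMmean, hMmean, hMmean]
      ring
    -- pointwise expansion
    have heq : (fun ω => ((a + (η 0 ω + η 1 ω + η 2 ω)) - (M₀ *ᵥ ε 0 ω + M₁ *ᵥ ε 1 ω + M₂ *ᵥ ε 2 ω)) ⬝ᵥ
            ((a + (η 0 ω + η 1 ω + η 2 ω)) - (M₀ *ᵥ ε 0 ω + M₁ *ᵥ ε 1 ω + M₂ *ᵥ ε 2 ω)))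
        = fun ω => a ⬝ᵥ a
            + ((η 0 ω + η 1 ω + η 2 ω) ⬝ᵥ (η 0 ω + η 1 ω + η 2 ω))
            + ((M₀ *ᵥ ε 0 ω + M₁ *ᵥ ε 1 ω + M₂ *ᵥ ε 2 ω) ⬝ᵥ (M₀ *ᵥ ε 0 ω + M₁ *ᵥ ε 1 ω + M₂ *ᵥ ε 2 ω))
            + 2 * (a ⬝ᵥ (η 0 ω + η 1 ω + η 2 ω))
            - 2 * (a ⬝ᵥ (M₀ *ᵥ ε 0 ω + M₁ *ᵥ ε 1 ω + M₂ *ᵥ ε 2 ω))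
            - 2 * ((η 0 ω + η 1 ω + η 2 ω) ⬝ᵥ (M₀ *ᵥ ε 0 ω + M₁ *ᵥ ε 1 ω + M₂ *ᵥ ε 2 ω)) := by
      funext ω
      simp only [dotProduct, Pi.add_apply, Pi.sub_apply, Finset.mul_sum,
        ← Finset.sum_add_distrib, ← Finset.sum_sub_distrib]
      exact Finset.sum_congr rfl fun i _ => by ring
    rw [heq]
    -- integrability of pieces
    have iS : Integrable (fun ω => (η 0 ω + η 1 ω + η 2 ω) ⬝ᵥ (η 0 ω + η 1 ω + η 2 ω)) P :=
      dotInt _ _ hs2 hs2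
    have iT : Integrable (fun ω => (M₀ *ᵥ ε 0 ω + M₁ *ᵥ ε 1 ω + M₂ *ᵥ ε 2 ω) ⬝ᵥ
        (M₀ *ᵥ ε 0 ω + M₁ *ᵥ ε 1 ω + M₂ *ᵥ ε 2 ω)) P := dotInt _ _ ht2 ht2
    have iAS : Integrable (fun ω => a ⬝ᵥ (η 0 ω + η 1 ω + η 2 ω)) P :=
      dotInt (fun _ => a) _ ha2 hs2
    have iAT : Integrable (fun ω => a ⬝ᵥ (M₀ *ᵥ ε 0 ω + M₁ *ᵥ ε 1 ω + M₂ *ᵥ ε 2 ω)) P :=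
      dotInt (fun _ => a) _ ha2 ht2
    have iST : Integrable (fun ω => (η 0 ω + η 1 ω + η 2 ω) ⬝ᵥ
        (M₀ *ᵥ ε 0 ω + M₁ *ᵥ ε 1 ω + M₂ *ᵥ ε 2 ω)) P := dotInt _ _ hs2 ht2
    have j1 : Integrable (fun ω => a ⬝ᵥ a
        + (η 0 ω + η 1 ω + η 2 ω) ⬝ᵥ (η 0 ω + η 1 ω + η 2 ω)) P :=
      (integrable_const _).add iS
    have j2 : Integrable (fun ω => a ⬝ᵥ a
        + (η 0 ω + η 1 ω + η 2 ω) ⬝ᵥ (η 0 ω + η 1 ω + η 2 ω)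
        + (M₀ *ᵥ ε 0 ω + M₁ *ᵥ ε 1 ω + M₂ *ᵥ ε 2 ω) ⬝ᵥ
          (M₀ *ᵥ ε 0 ω + M₁ *ᵥ ε 1 ω + M₂ *ᵥ ε 2 ω)) P := j1.add iT
    have j3 : Integrable (fun ω => a ⬝ᵥ a
        + (η 0 ω + η 1 ω + η 2 ω) ⬝ᵥ (η 0 ω + η 1 ω + η 2 ω)
        + (M₀ *ᵥ ε 0 ω + M₁ *ᵥ ε 1 ω + M₂ *ᵥ ε 2 ω) ⬝ᵥ
          (M₀ *ᵥ ε 0 ω + M₁ *ᵥ ε 1 ω + M₂ *ᵥ ε 2 ω)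
        + 2 * (a ⬝ᵥ (η 0 ω + η 1 ω + η 2 ω))) P := j2.add (iAS.const_mul 2)
    have j4 : Integrable (fun ω => a ⬝ᵥ a
        + (η 0 ω + η 1 ω + η 2 ω) ⬝ᵥ (η 0 ω + η 1 ω + η 2 ω)
        + (M₀ *ᵥ ε 0 ω + M₁ *ᵥ ε 1 ω + M₂ *ᵥ ε 2 ω) ⬝ᵥ
          (M₀ *ᵥ ε 0 ω + M₁ *ᵥ ε 1 ω + M₂ *ᵥ ε 2 ω)
        + 2 * (a ⬝ᵥ (η 0 ω + η 1 ω + η 2 ω))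
        - 2 * (a ⬝ᵥ (M₀ *ᵥ ε 0 ω + M₁ *ᵥ ε 1 ω + M₂ *ᵥ ε 2 ω))) P :=
      j3.sub (iAT.const_mul 2)
    rw [integral_sub j4 (iST.const_mul 2),
      integral_sub j3 (iAT.const_mul 2),
      integral_add j2 (iAS.const_mul 2),
      integral_add j1 iT,
      integral_add (integrable_const _) iS,
      integral_const, integral_const_mul, integral_const_mul, integral_const_mul]
    -- zero terms
    have hAS0 : ∫ ω, a ⬝ᵥ (η 0 ω + η 1 ω + η 2 ω) ∂P = 0 := hdot0 a _ hsint hsmean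
    have hAT0 : ∫ ω, a ⬝ᵥ (M₀ *ᵥ ε 0 ω + M₁ *ᵥ ε 1 ω + M₂ *ᵥ ε 2 ω) ∂P = 0 :=
      hdot0 a _ htint htmean
    -- s ⬝ t term
    have hηT : ∀ m : Fin 3,
        ∫ ω, (η m ω) ⬝ᵥ (M₀ *ᵥ ε 0 ω + M₁ *ᵥ ε 1 ω + M₂ *ᵥ ε 2 ω) ∂P = 0 := by
      intro m
      have hsplit : (fun ω => (η m ω) ⬝ᵥ (M₀ *ᵥ ε 0 ω + M₁ *ᵥ ε 1 ω + M₂ *ᵥ ε 2 ω))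
          = fun ω => (η m ω) ⬝ᵥ (M₀ *ᵥ ε 0 ω) + (η m ω) ⬝ᵥ (M₁ *ᵥ ε 1 ω)
              + (η m ω) ⬝ᵥ (M₂ *ᵥ ε 2 ω) := by
        funext ω; simp [add_dotProduct, dotProduct_add]; try ring
      have i1 : Integrable (fun ω => (η m ω) ⬝ᵥ (M₀ *ᵥ ε 0 ω)) P :=
        dotInt _ _ (fun i => hηL2 m i) (hML2 M₀ 0)
      have i2 : Integrable (fun ω => (η m ω) ⬝ᵥ (M₁ *ᵥ ε 1 ω)) P :=
        dotInt _ _ (fun i => hηL2 m i) (hML2 M₁ 1)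
      have i3 : Integrable (fun ω => (η m ω) ⬝ᵥ (M₂ *ᵥ ε 2 ω)) P :=
        dotInt _ _ (fun i => hηL2 m i) (hML2 M₂ 2)
      have i12 : Integrable (fun ω => (η m ω) ⬝ᵥ (M₀ *ᵥ ε 0 ω)
          + (η m ω) ⬝ᵥ (M₁ *ᵥ ε 1 ω)) P := i1.add i2
      rw [hsplit, integral_add i12 i3, integral_add i1 i2,
        hηεdot0, hηεdot0, hηεdot0]
      ring
    have hST0 : ∫ ω, (η 0 ω + η 1 ω + η 2 ω) ⬝ᵥ
        (M₀ *ᵥ ε 0 ω + M₁ *ᵥ ε 1 ω + M₂ *ᵥ ε 2 ω) ∂P = 0 := by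
      have hsplit : (fun ω => (η 0 ω + η 1 ω + η 2 ω) ⬝ᵥ
            (M₀ *ᵥ ε 0 ω + M₁ *ᵥ ε 1 ω + M₂ *ᵥ ε 2 ω))
          = fun ω => (η 0 ω) ⬝ᵥ (M₀ *ᵥ ε 0 ω + M₁ *ᵥ ε 1 ω + M₂ *ᵥ ε 2 ω)
              + (η 1 ω) ⬝ᵥ (M₀ *ᵥ ε 0 ω + M₁ *ᵥ ε 1 ω + M₂ *ᵥ ε 2 ω)
              + (η 2 ω) ⬝ᵥ (M₀ *ᵥ ε 0 ω + M₁ *ᵥ ε 1 ω + M₂ *ᵥ ε 2 ω) := by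
        funext ω; simp [add_dotProduct, dotProduct_add]; try ring
      have i1 : ∀ m : Fin 3, Integrable (fun ω => (η m ω) ⬝ᵥ
          (M₀ *ᵥ ε 0 ω + M₁ *ᵥ ε 1 ω + M₂ *ᵥ ε 2 ω)) P :=
        fun m => dotInt _ _ (fun i => hηL2 m i) ht2
      have i12 : Integrable (fun ω => (η 0 ω) ⬝ᵥ (M₀ *ᵥ ε 0 ω + M₁ *ᵥ ε 1 ω + M₂ *ᵥ ε 2 ω)
          + (η 1 ω) ⬝ᵥ (M₀ *ᵥ ε 0 ω + M₁ *ᵥ ε 1 ω + M₂ *ᵥ ε 2 ω)) P := (i1 0).add (i1 1)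
      rw [hsplit, integral_add i12 (i1 2), integral_add (i1 0) (i1 1),
        hηT, hηT, hηT]
      ring
    -- t ⬝ t term
    have hUT : ∀ (N : Matrix (Fin n) (Fin n) ℝ) (m : Fin 3),
        ∫ ω, (N *ᵥ ε m ω) ⬝ᵥ (M₀ *ᵥ ε 0 ω + M₁ *ᵥ ε 1 ω + M₂ *ᵥ ε 2 ω) ∂P
          = Matrix.trace (Nᵀ * M₀ * Sig 0 m) + Matrix.trace (Nᵀ * M₁ * Sig 1 m)
            + Matrix.trace (Nᵀ * M₂ * Sig 2 m) := by
      intro N m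
      have hsplit : (fun ω => (N *ᵥ ε m ω) ⬝ᵥ (M₀ *ᵥ ε 0 ω + M₁ *ᵥ ε 1 ω + M₂ *ᵥ ε 2 ω))
          = fun ω => (N *ᵥ ε m ω) ⬝ᵥ (M₀ *ᵥ ε 0 ω) + (N *ᵥ ε m ω) ⬝ᵥ (M₁ *ᵥ ε 1 ω)
              + (N *ᵥ ε m ω) ⬝ᵥ (M₂ *ᵥ ε 2 ω) := by
        funext ω; simp [add_dotProduct, dotProduct_add]; try ring
      have i1 : Integrable (fun ω => (N *ᵥ ε m ω) ⬝ᵥ (M₀ *ᵥ ε 0 ω)) P :=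
        dotInt _ _ (hML2 N m) (hML2 M₀ 0)
      have i2 : Integrable (fun ω => (N *ᵥ ε m ω) ⬝ᵥ (M₁ *ᵥ ε 1 ω)) P :=
        dotInt _ _ (hML2 N m) (hML2 M₁ 1)
      have i3 : Integrable (fun ω => (N *ᵥ ε m ω) ⬝ᵥ (M₂ *ᵥ ε 2 ω)) P :=
        dotInt _ _ (hML2 N m) (hML2 M₂ 2)
      have i12 : Integrable (fun ω => (N *ᵥ ε m ω) ⬝ᵥ (M₀ *ᵥ ε 0 ω)
          + (N *ᵥ ε m ω) ⬝ᵥ (M₁ *ᵥ ε 1 ω)) P := i1.add i2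
      rw [hsplit, integral_add i12 i3, integral_add i1 i2,
        hqd N M₀ m 0, hqd N M₁ m 1, hqd N M₂ m 2]
    have hTT : ∫ ω, (M₀ *ᵥ ε 0 ω + M₁ *ᵥ ε 1 ω + M₂ *ᵥ ε 2 ω) ⬝ᵥ
        (M₀ *ᵥ ε 0 ω + M₁ *ᵥ ε 1 ω + M₂ *ᵥ ε 2 ω) ∂P
        = Matrix.trace (M₀ᵀ * M₀ * Sig 0 0) + Matrix.trace (M₀ᵀ * M₁ * Sig 1 0)
          + Matrix.trace (M₀ᵀ * M₂ * Sig 2 0) + Matrix.trace (M₁ᵀ * M₀ * Sig 0 1)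
          + Matrix.trace (M₁ᵀ * M₁ * Sig 1 1) + Matrix.trace (M₁ᵀ * M₂ * Sig 2 1)
          + Matrix.trace (M₂ᵀ * M₀ * Sig 0 2) + Matrix.trace (M₂ᵀ * M₁ * Sig 1 2)
          + Matrix.trace (M₂ᵀ * M₂ * Sig 2 2) := by
      have hsplit : (fun ω => (M₀ *ᵥ ε 0 ω + M₁ *ᵥ ε 1 ω + M₂ *ᵥ ε 2 ω) ⬝ᵥ
            (M₀ *ᵥ ε 0 ω + M₁ *ᵥ ε 1 ω + M₂ *ᵥ ε 2 ω))
          = fun ω => (M₀ *ᵥ ε 0 ω) ⬝ᵥ (M₀ *ᵥ ε 0 ω + M₁ *ᵥ ε 1 ω + M₂ *ᵥ ε 2 ω)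
              + (M₁ *ᵥ ε 1 ω) ⬝ᵥ (M₀ *ᵥ ε 0 ω + M₁ *ᵥ ε 1 ω + M₂ *ᵥ ε 2 ω)
              + (M₂ *ᵥ ε 2 ω) ⬝ᵥ (M₀ *ᵥ ε 0 ω + M₁ *ᵥ ε 1 ω + M₂ *ᵥ ε 2 ω) := by
        funext ω; simp [add_dotProduct, dotProduct_add]; try ring
      have i1 : Integrable (fun ω => (M₀ *ᵥ ε 0 ω) ⬝ᵥ
          (M₀ *ᵥ ε 0 ω + M₁ *ᵥ ε 1 ω + M₂ *ᵥ ε 2 ω)) P := dotInt _ _ (hML2 M₀ 0) ht2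
      have i2 : Integrable (fun ω => (M₁ *ᵥ ε 1 ω) ⬝ᵥ
          (M₀ *ᵥ ε 0 ω + M₁ *ᵥ ε 1 ω + M₂ *ᵥ ε 2 ω)) P := dotInt _ _ (hML2 M₁ 1) ht2
      have i3 : Integrable (fun ω => (M₂ *ᵥ ε 2 ω) ⬝ᵥ
          (M₀ *ᵥ ε 0 ω + M₁ *ᵥ ε 1 ω + M₂ *ᵥ ε 2 ω)) P := dotInt _ _ (hML2 M₂ 2) ht2
      have i12 : Integrable (fun ω => (M₀ *ᵥ ε 0 ω) ⬝ᵥ (M₀ *ᵥ ε 0 ω + M₁ *ᵥ ε 1 ω + M₂ *ᵥ ε 2 ω)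
          + (M₁ *ᵥ ε 1 ω) ⬝ᵥ (M₀ *ᵥ ε 0 ω + M₁ *ᵥ ε 1 ω + M₂ *ᵥ ε 2 ω)) P := i1.add i2
      rw [hsplit, integral_add i12 i3, integral_add i1 i2,
        hUT M₀ 0, hUT M₁ 1, hUT M₂ 2]
      ring
    rw [hAS0, hAT0, hST0, hTT]
    simp [measure_univ]
  -- ### rewrite the two integrands
  have hvecA : ∀ ω, (z 0 ω + z 1 ω + z 2 ω) - (yhat ω + yhat₃ ω)
      = (((1 - H) *ᵥ (Wθ 0 + Wθ 1) + (1 - H₃) *ᵥ Wθ 2) + (η 0 ω + η 1 ω + η 2 ω))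
        - (H *ᵥ ε 0 ω + H *ᵥ ε 1 ω + H₃ *ᵥ ε 2 ω) := by
    intro ω
    unfold z yhat yhat₃ y Wθ
    simp only [Matrix.mulVec_add, Matrix.sub_mulVec, Matrix.one_mulVec, hv0, hv1, hv32]
    abel
  have hvecB : ∀ ω, (z 0 ω + z 1 ω + z 2 ω) - (yhatStar ω + yhat₃ ω)
      = ((((1 - H₁) *ᵥ Wθ 0 + (1 - H₂) *ᵥ Wθ 1) + (1 - H₃) *ᵥ Wθ 2) + (η 0 ω + η 1 ω + η 2 ω))
        - (H₁ *ᵥ ε 0 ω + H₂ *ᵥ ε 1 ω + H₃ *ᵥ ε 2 ω) := by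
    intro ω
    unfold z yhatStar yhat₃ y Wθ
    simp only [Matrix.mulVec_add, Matrix.sub_mulVec, Matrix.one_mulVec, hv10, hv21, hv32]
    abel
  have eA : (fun ω => ((z 0 ω + z 1 ω + z 2 ω) - (yhat ω + yhat₃ ω)) ⬝ᵥ
        ((z 0 ω + z 1 ω + z 2 ω) - (yhat ω + yhat₃ ω)))
      = fun ω => ((((1 - H) *ᵥ (Wθ 0 + Wθ 1) + (1 - H₃) *ᵥ Wθ 2) + (η 0 ω + η 1 ω + η 2 ω))
          - (H *ᵥ ε 0 ω + H *ᵥ ε 1 ω + H₃ *ᵥ ε 2 ω)) ⬝ᵥ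
          ((((1 - H) *ᵥ (Wθ 0 + Wθ 1) + (1 - H₃) *ᵥ Wθ 2) + (η 0 ω + η 1 ω + η 2 ω))
          - (H *ᵥ ε 0 ω + H *ᵥ ε 1 ω + H₃ *ᵥ ε 2 ω)) :=
    funext fun ω => by rw [hvecA ω]
  have eB : (fun ω => ((z 0 ω + z 1 ω + z 2 ω) - (yhatStar ω + yhat₃ ω)) ⬝ᵥ
        ((z 0 ω + z 1 ω + z 2 ω) - (yhatStar ω + yhat₃ ω)))
      = fun ω => (((((1 - H₁) *ᵥ Wθ 0 + (1 - H₂) *ᵥ Wθ 1) + (1 - H₃) *ᵥ Wθ 2) + (η 0 ω + η 1 ω + η 2 ω))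
          - (H₁ *ᵥ ε 0 ω + H₂ *ᵥ ε 1 ω + H₃ *ᵥ ε 2 ω)) ⬝ᵥ
          (((((1 - H₁) *ᵥ Wθ 0 + (1 - H₂) *ᵥ Wθ 1) + (1 - H₃) *ᵥ Wθ 2) + (η 0 ω + η 1 ω + η 2 ω))
          - (H₁ *ᵥ ε 0 ω + H₂ *ᵥ ε 1 ω + H₃ *ᵥ ε 2 ω)) :=
    funext fun ω => by rw [hvecB ω]
  rw [eA, eB, G ((1 - H) *ᵥ (Wθ 0 + Wθ 1) + (1 - H₃) *ᵥ Wθ 2) H H H₃,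
    G (((1 - H₁) *ᵥ Wθ 0 + (1 - H₂) *ᵥ Wθ 1) + (1 - H₃) *ᵥ Wθ 2) H₁ H₂ H₃]
  -- ### deterministic part
  have c10 : Wθ 1 ⬝ᵥ Wθ 0 = Wθ 0 ⬝ᵥ Wθ 1 := dotProduct_comm _ _
  have c20 : Wθ 2 ⬝ᵥ Wθ 0 = Wθ 0 ⬝ᵥ Wθ 2 := dotProduct_comm _ _
  have c21 : Wθ 2 ⬝ᵥ Wθ 1 = Wθ 1 ⬝ᵥ Wθ 2 := dotProduct_comm _ _
  have f10 : ∀ K : Matrix (Fin n) (Fin n) ℝ, Wθ 1 ⬝ᵥ (K *ᵥ Wθ 0) = Wθ 0 ⬝ᵥ (Kᵀ *ᵥ Wθ 1) :=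
    fun K => (dotProduct_comm _ _).trans (flip_dot K (Wθ 0) (Wθ 1))
  have f20 : ∀ K : Matrix (Fin n) (Fin n) ℝ, Wθ 2 ⬝ᵥ (K *ᵥ Wθ 0) = Wθ 0 ⬝ᵥ (Kᵀ *ᵥ Wθ 2) :=
    fun K => (dotProduct_comm _ _).trans (flip_dot K (Wθ 0) (Wθ 2))
  have f21 : ∀ K : Matrix (Fin n) (Fin n) ℝ, Wθ 2 ⬝ᵥ (K *ᵥ Wθ 1) = Wθ 1 ⬝ᵥ (Kᵀ *ᵥ Wθ 2) :=
    fun K => (dotProduct_comm _ _).trans (flip_dot K (Wθ 1) (Wθ 2))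
  have hdet : ((1 - H) *ᵥ (Wθ 0 + Wθ 1) + (1 - H₃) *ᵥ Wθ 2) ⬝ᵥ
        ((1 - H) *ᵥ (Wθ 0 + Wθ 1) + (1 - H₃) *ᵥ Wθ 2)
      - ((((1 - H₁) *ᵥ Wθ 0 + (1 - H₂) *ᵥ Wθ 1) + (1 - H₃) *ᵥ Wθ 2) ⬝ᵥ
        (((1 - H₁) *ᵥ Wθ 0 + (1 - H₂) *ᵥ Wθ 1) + (1 - H₃) *ᵥ Wθ 2))
      = ((1 - H).mulVec (Wθ 0)) ⬝ᵥ ((1 - H).mulVec (Wθ 0))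
        - ((1 - H₁).mulVec (Wθ 0)) ⬝ᵥ ((1 - H₁).mulVec (Wθ 0))
        + ((1 - H).mulVec (Wθ 1)) ⬝ᵥ ((1 - H).mulVec (Wθ 1))
        - ((1 - H₂).mulVec (Wθ 1)) ⬝ᵥ ((1 - H₂).mulVec (Wθ 1))
        + 2 * ((Wθ 0) ⬝ᵥ ((1 - H).mulVec (Wθ 1)))
        - 2 * ((Wθ 0) ⬝ᵥ (((1 - H₁) * (1 - H₂)).mulVec (Wθ 1)))
        + 2 * ((Wθ 2) ⬝ᵥ (((1 - H₃) * (H₁ - H)).mulVec (Wθ 0)))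
        + 2 * ((Wθ 2) ⬝ᵥ (((1 - H₃) * (H₂ - H)).mulVec (Wθ 1))) := by
    simp only [Matrix.mul_sub, Matrix.sub_mul, Matrix.mul_one, Matrix.one_mul,
      Matrix.sub_mulVec, Matrix.add_mulVec, Matrix.one_mulVec, Matrix.mulVec_add,
      dotProduct_add, dotProduct_sub, add_dotProduct,
      sub_dotProduct, flip_dot, Matrix.mulVec_mulVec,
      Matrix.transpose_mul, hsH, hsH1, hsH2, hsH3, hHH, hH1H1, hH2H2, hH3H3]
    simp only [f10, f20, f21, c10, c20, c21, Matrix.transpose_mul, hsH, hsH1, hsH2, hsH3]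
    ring
  -- ### trace part
  have hT : ∀ (A : Matrix (Fin n) (Fin n) ℝ) (m m' : Fin 3),
      Matrix.trace (A * Sig m m') = Matrix.trace (Aᵀ * Sig m' m) := by
    intro A m m'
    have h1 : (Sig m m')ᵀ = Sig m' m := by
      ext j k
      exact hSigsymm m' m j k
    calc Matrix.trace (A * Sig m m') = Matrix.trace ((A * Sig m m')ᵀ) :=
          (Matrix.trace_transpose _).symm
      _ = Matrix.trace ((Sig m m')ᵀ * Aᵀ) := by rw [Matrix.transpose_mul]
      _ = Matrix.trace (Sig m' m * Aᵀ) := by rw [h1]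
      _ = Matrix.trace (Aᵀ * Sig m' m) := Matrix.trace_mul_comm _ _
  have htr : (Matrix.trace (Hᵀ * H * Sig 0 0) + Matrix.trace (Hᵀ * H * Sig 1 0)
        + Matrix.trace (Hᵀ * H₃ * Sig 2 0) + Matrix.trace (Hᵀ * H * Sig 0 1)
        + Matrix.trace (Hᵀ * H * Sig 1 1) + Matrix.trace (Hᵀ * H₃ * Sig 2 1)
        + Matrix.trace (H₃ᵀ * H * Sig 0 2) + Matrix.trace (H₃ᵀ * H * Sig 1 2)
        + Matrix.trace (H₃ᵀ * H₃ * Sig 2 2))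
      - (Matrix.trace (H₁ᵀ * H₁ * Sig 0 0) + Matrix.trace (H₁ᵀ * H₂ * Sig 1 0)
        + Matrix.trace (H₁ᵀ * H₃ * Sig 2 0) + Matrix.trace (H₂ᵀ * H₁ * Sig 0 1)
        + Matrix.trace (H₂ᵀ * H₂ * Sig 1 1) + Matrix.trace (H₂ᵀ * H₃ * Sig 2 1)
        + Matrix.trace (H₃ᵀ * H₁ * Sig 0 2) + Matrix.trace (H₃ᵀ * H₂ * Sig 1 2)
        + Matrix.trace (H₃ᵀ * H₃ * Sig 2 2))
      = Matrix.trace ((H - H₁) * Sig 0 0) + Matrix.trace ((H - H₂) * Sig 1 1)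
        + 2 * Matrix.trace ((H - H₂ * H₁) * Sig 0 1)
        + 2 * Matrix.trace (H₃ * (H - H₁) * Sig 0 2)
        + 2 * Matrix.trace (H₃ * (H - H₂) * Sig 1 2) := by
    simp only [hsH, hsH1, hsH2, hsH3, hHH, hH1H1, hH2H2, hH3H3]
    rw [hT H 1 0, hT (H * H₃) 2 0, hT (H * H₃) 2 1, hT (H₁ * H₂) 1 0,
      hT (H₁ * H₃) 2 0, hT (H₂ * H₃) 2 1]
    simp only [Matrix.transpose_mul, hsH, hsH1, hsH2, hsH3]
    simp only [Matrix.sub_mul, Matrix.mul_sub, Matrix.trace_sub]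
    ring
  linear_combination hdet + htr
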